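/- Let q ∈ ℂ* not a root of unity, m ∈ ℤ≥0, t = q^{-m}. The first Macdonald operator M = ∑_{j=1}^N (∏_{i≠j}(X_i − q^{-m}X_j)/(X_i − X_j)) τ_j preserves the space Q_{m,q}^{trig} of q-deformed m-quasiinvariant Laurent polynomials: F ∈ ℂ[X_1^{±1},…,X_N^{±1}] such that (1 − s_{ij})F is divisible by ∏_{p=−m}^{m}(X_i − q^pX_j) for all i < j. -/

import Mathlib

/- STATEMENT 15: Let q ∈ ℂ* not be a root of unity, m ∈ ℤ≥0, t = q^{-m}.  The
first Macdonald operator M = ∑_j (∏_{i≠j}(X_i − tX_j)/(X_i − X_j)) τ_j preserves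
the space Q_{m,q}^{trig} of q-deformed m-quasiinvariant Laurent polynomials:
F with (1 − s_{ij})F divisible by ∏_{p=−m}^{m}(X_i − q^p X_j) for all i < j.

Laurent polynomials are realized as the group algebra L of ℤ^N; the statement
"MF ∈ Q" is expressed denominator-free: (∏_j d_j)·G = ∑_j n_j·(∏_{j'≠j} d_{j'})·τ_jF
for some G ∈ Q, where d_j = ∏_{i≠j}(X_i − X_j), n_j = ∏_{i≠j}(X_i − tX_j). -/

noncomputable section

abbrev Laur (N : ℕ) := AddMonoidAlgebra ℂ (Fin N → ℤ)

/-- the monomial X_i -/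
noncomputable def XL {N : ℕ} (i : Fin N) : Laur N :=
  AddMonoidAlgebra.single (Pi.single i (1 : ℤ)) (1 : ℂ)

/-- the transposition s_{ij} of the variables X_i, X_j -/
noncomputable def sL {N : ℕ} (i j : Fin N) : Laur N →ₗ[ℂ] Laur N :=
  AddMonoidAlgebra.mapDomainLinearMap ℂ ℂ (fun m : Fin N → ℤ => m ∘ (Equiv.swap i j))

/-- the shift operator τ_j : X_j ↦ qX_j -/
noncomputable def tauL {N : ℕ} (q : ℂ) (j : Fin N) : Laur N →ₗ[ℂ] Laur N :=
  Finsupp.lsum ℂ (fun m : Fin N → ℤ => LinearMap.toSpanSingleton ℂ (Laur N)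
    ((q ^ (m j)) • (AddMonoidAlgebra.single m (1 : ℂ) : Laur N)))
    ∘ₗ (AddMonoidAlgebra.coeffLinearEquiv ℂ).toLinearMap

/-- the space of q-deformed m-quasiinvariant Laurent polynomials -/
noncomputable def Qtrig (N : ℕ) (m : ℕ) (q : ℂ) : Set (Laur N) :=
  {F | ∀ i j : Fin N, i < j → ∃ G : Laur N,
    F - sL i j F =
      (∏ p ∈ Finset.Icc (-(m : ℤ)) (m : ℤ), (XL i - (q ^ p) • XL j)) * G}

namespace S15
open Finset AddMonoidAlgebra

variable {N : ℕ}

instance : IsDomain (Laur N) := NoZeroDivisors.to_isDomain _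

/-- the monomial unit with exponent vector `v` -/
def Um (v : Fin N → ℤ) : (Laur N)ˣ where
  val := AddMonoidAlgebra.single v 1
  inv := AddMonoidAlgebra.single (-v) 1
  val_inv := by
    rw [AddMonoidAlgebra.single_mul_single]; simp [AddMonoidAlgebra.one_def]
  inv_val := by
    rw [AddMonoidAlgebra.single_mul_single]; simp [AddMonoidAlgebra.one_def]

@[simp] lemma Um_val (v : Fin N → ℤ) :
    (Um v : Laur N) = AddMonoidAlgebra.single v 1 := rfl

def UmHom : Multiplicative (Fin N → ℤ) →* (Laur N)ˣ where
  toFun v := Um (Multiplicative.toAdd v)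
  map_one' := by
    apply Units.ext; simp [AddMonoidAlgebra.one_def]
  map_mul' v w := by
    apply Units.ext
    simp [AddMonoidAlgebra.single_mul_single]

lemma Um_zsmul (k : ℤ) (v : Fin N → ℤ) : Um (k • v) = Um v ^ k := by
  have := UmHom.map_zpow (Multiplicative.ofAdd v) k
  simpa [UmHom] using this

def Xu (i : Fin N) : (Laur N)ˣ := Um (Pi.single i 1)

@[simp] lemma Xu_val (i : Fin N) : (Xu i : Laur N) = XL i := rfl

lemma prod_Xu_eq (m : Fin N → ℤ) : (∏ i, Xu i ^ (m i)) = Um m := by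
  have h1 : ∀ i : Fin N, Xu i ^ (m i) = Um (Pi.single i (m i)) := by
    intro i
    rw [Xu, ← Um_zsmul]
    congr 1
    ext k
    simp [Pi.single_apply]
  calc (∏ i, Xu i ^ (m i)) = ∏ i, UmHom (Multiplicative.ofAdd (Pi.single i (m i))) := by
        simp [h1, UmHom]
    _ = UmHom (∏ i, Multiplicative.ofAdd (Pi.single i (m i))) := by rw [map_prod]
    _ = Um m := by
        have : (∏ i, Multiplicative.ofAdd (Pi.single i (m i)))
            = Multiplicative.ofAdd (∑ i, Pi.single i (m i)) := by
          simp
        rw [this, Finset.univ_sum_single]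
        rfl

lemma single_eq_prod (m : Fin N → ℤ) :
    (AddMonoidAlgebra.single m (1:ℂ) : Laur N) = ↑(∏ i, Xu i ^ (m i)) := by
  rw [prod_Xu_eq]; rfl

/-- the assignment monoid hom underlying substitution -/
def uProd (u : Fin N → (Laur N)ˣ) : Multiplicative (Fin N → ℤ) →* (Laur N)ˣ where
  toFun v := ∏ i, u i ^ (Multiplicative.toAdd v i)
  map_one' := by simp
  map_mul' v w := by
    show (∏ i, u i ^ (Multiplicative.toAdd (v * w) i)) = _
    simp only [toAdd_mul, Pi.add_apply, zpow_add, Finset.prod_mul_distrib]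

/-- substitution: the ℂ-algebra endomorphism of `Laur N` sending `X_i` to the unit `u i` -/
def subst (u : Fin N → (Laur N)ˣ) : Laur N →ₐ[ℂ] Laur N :=
  AddMonoidAlgebra.lift ℂ _ _ ((Units.coeHom _).comp (uProd u))

lemma subst_single (u : Fin N → (Laur N)ˣ) (m : Fin N → ℤ) (c : ℂ) :
    subst u (AddMonoidAlgebra.single m c) = c • ↑(∏ i, u i ^ (m i)) := by
  rw [subst, AddMonoidAlgebra.lift_single]
  rfl

lemma subst_XL (u : Fin N → (Laur N)ˣ) (i : Fin N) :
    subst u (XL i) = ↑(u i) := by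
  have : XL i = AddMonoidAlgebra.single (Pi.single i (1:ℤ)) (1:ℂ) := rfl
  rw [this, subst_single, one_smul]
  congr 1
  rw [Finset.prod_eq_single i]
  · simp
  · intro b _ hb
    rw [Pi.single_eq_of_ne hb, zpow_zero]
  · simp

lemma subst_subst (u v : Fin N → (Laur N)ˣ) (f : Laur N) :
    subst u (subst v f)
      = subst (fun i => Units.map ((subst u).toRingHom.toMonoidHom) (v i)) f := by
  have h : (subst u).comp (subst v)
      = subst (fun i => Units.map ((subst u).toRingHom.toMonoidHom) (v i)) := by
    apply AddMonoidAlgebra.algHom_ext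
    intro m
    rw [AlgHom.comp_apply, subst_single, one_smul, subst_single, one_smul]
    rw [← Units.coeHom_apply, map_prod ((Units.coeHom (Laur N)))]
    rw [← Units.coeHom_apply, map_prod ((Units.coeHom (Laur N)))]
    simp only [Units.coeHom_apply]
    rw [map_prod (subst u)]
    apply Finset.prod_congr rfl
    intro i _
    rw [← map_zpow (Units.map ((subst u).toRingHom.toMonoidHom)) (v i) (m i),
      Units.coe_map]
    rfl
    exact Subsingleton.elim _ _
  exact congrFun (congrArg DFunLike.coe h) f
-- appended to part1
/-- the scalar unit -/
def cu (c : ℂ) (hc : c ≠ 0) : (Laur N)ˣ :=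
  Units.map (algebraMap ℂ (Laur N)).toMonoidHom (Units.mk0 c hc)

@[simp] lemma cu_val (c : ℂ) (hc : c ≠ 0) :
    ((cu c hc : (Laur N)ˣ) : Laur N) = algebraMap ℂ (Laur N) c := rfl

lemma cu_zpow_val (c : ℂ) (hc : c ≠ 0) (k : ℤ) :
    ((cu c hc ^ k : (Laur N)ˣ) : Laur N) = algebraMap ℂ (Laur N) (c ^ k) := by
  have h : (cu c hc : (Laur N)ˣ) ^ k
      = Units.map (algebraMap ℂ (Laur N)).toMonoidHom (Units.mk0 c hc ^ k) := by
    rw [map_zpow]; rfl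
  rw [h, Units.coe_map]
  show algebraMap ℂ (Laur N) ((Units.mk0 c hc ^ k : ℂˣ) : ℂ) = _
  congr 1
  rw [Units.val_zpow_eq_zpow_val]
  rfl

lemma cu_one : (cu 1 one_ne_zero : (Laur N)ˣ) = 1 := by
  apply Units.ext; rw [cu_val, map_one, Units.val_one]

lemma cu_smul (c : ℂ) (hc : c ≠ 0) (x : Laur N) :
    ((cu c hc : (Laur N)ˣ) : Laur N) * x = c • x := by
  rw [cu_val, ← Algebra.smul_def]

/-- assignment for τ_j -/
def tA (q : ℂ) (hq0 : q ≠ 0) (j : Fin N) : Fin N → (Laur N)ˣ :=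
  fun i => if i = j then cu q hq0 * Xu j else Xu i

/-- assignment for s_{ab} -/
def sA (a b : Fin N) : Fin N → (Laur N)ˣ := fun i => Xu (Equiv.swap a b i)

/-- assignment for the evaluation X_a ↦ c X_b -/
def eA (a b : Fin N) (c : ℂ) (hc : c ≠ 0) : Fin N → (Laur N)ˣ :=
  fun i => if i = a then cu c hc * Xu b else Xu i

lemma tauL_apply (q : ℂ) (hq0 : q ≠ 0) (j : Fin N) (f : Laur N) :
    tauL q j f = subst (tA q hq0 j) f := by
  induction f using AddMonoidAlgebra.induction_linear with
  | zero => simp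
  | add f g hf hg => rw [map_add, map_add, hf, hg]
  | single m c =>
    rw [tauL, LinearMap.comp_apply, LinearEquiv.coe_coe,
      AddMonoidAlgebra.coeffLinearEquiv_apply, AddMonoidAlgebra.coeff_single]
    erw [Finsupp.lsum_single]
    rw [LinearMap.toSpanSingleton_apply]
    rw [subst_single]
    have h1 : ∀ i, tA q hq0 j i = (if i = j then cu q hq0 else 1) * Xu i := by
      intro i
      by_cases h : i = j <;> simp [tA, h]
    have h2 : (∏ i, tA q hq0 j i ^ (m i))
        = cu q hq0 ^ (m j) * ∏ i, Xu i ^ (m i) := by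
      simp only [h1, mul_zpow, Finset.prod_mul_distrib]
      congr 1
      rw [Finset.prod_eq_single j]
      · simp
      · intro i _ hij; rw [if_neg hij, one_zpow]
      · simp
    rw [h2, prod_Xu_eq, Units.val_mul, cu_zpow_val]
    rw [show ((Um m : (Laur N)ˣ) : Laur N) = AddMonoidAlgebra.single m 1 from rfl]
    rw [← Algebra.smul_def]

lemma sL_apply (a b : Fin N) (f : Laur N) :
    sL a b f = subst (sA a b) f := by
  induction f using AddMonoidAlgebra.induction_linear with
  | zero => simp
  | add f g hf hg => rw [map_add, map_add, hf, hg]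
  | single m c =>
    rw [sL, AddMonoidAlgebra.mapDomainLinearMap_single]
    rw [subst_single]
    have h2 : (∏ i, sA a b i ^ (m i)) = Um (m ∘ (Equiv.swap a b)) := by
      rw [← prod_Xu_eq]
      apply Fintype.prod_equiv (Equiv.swap a b)
        (fun i => sA a b i ^ (m i)) (fun i => Xu i ^ ((m ∘ (Equiv.swap a b)) i))
      intro i
      simp [sA, Equiv.swap_apply_self]
    rw [h2, Um_val]
    rw [AddMonoidAlgebra.smul_single', mul_one]

lemma umap_Xu (u : Fin N → (Laur N)ˣ) (k : Fin N) :
    Units.map (subst u).toRingHom.toMonoidHom (Xu k) = u k := by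
  apply Units.ext
  rw [Units.coe_map]
  exact subst_XL u k

lemma umap_cu (u : Fin N → (Laur N)ˣ) (c : ℂ) (hc : c ≠ 0) :
    Units.map (subst u).toRingHom.toMonoidHom (cu c hc) = cu c hc := by
  apply Units.ext
  rw [Units.coe_map, cu_val]
  exact (subst u).commutes c

/-- evaluation absorbs the swap (case c = 1) -/
lemma ev_one_sw (a b : Fin N) (hab : a ≠ b) (f : Laur N) :
    subst (eA a b 1 one_ne_zero) (subst (sA a b) f)
      = subst (eA a b 1 one_ne_zero) f := by
  rw [subst_subst]
  have key : (fun i => Units.map (subst (eA a b 1 one_ne_zero)).toRingHom.toMonoidHom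
      (sA a b i)) = eA a b 1 one_ne_zero := by
    funext i
    show Units.map _ (Xu (Equiv.swap a b i)) = _
    rw [umap_Xu]
    show eA a b 1 one_ne_zero (Equiv.swap a b i) = eA a b 1 one_ne_zero i
    unfold eA
    rcases eq_or_ne i a with h | h
    · subst h
      rw [Equiv.swap_apply_left, if_neg (Ne.symm hab), if_pos rfl, cu_one, one_mul]
    · rcases eq_or_ne i b with h' | h'
      · subst h'
        rw [Equiv.swap_apply_right, if_pos rfl, if_neg h, cu_one, one_mul]
      · rw [Equiv.swap_apply_of_ne_of_ne h h', if_neg h]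
  rw [key]

/-- swap conjugates the shift -/
lemma sw_tau (a b j : Fin N) (q : ℂ) (hq0 : q ≠ 0) (f : Laur N) :
    subst (sA a b) (subst (tA q hq0 j) f)
      = subst (tA q hq0 (Equiv.swap a b j)) (subst (sA a b) f) := by
  rw [subst_subst, subst_subst]
  have key : (fun i => Units.map (subst (sA a b)).toRingHom.toMonoidHom (tA q hq0 j i))
      = (fun i => Units.map
        (subst (tA q hq0 (Equiv.swap a b j))).toRingHom.toMonoidHom (sA a b i)) := by
    funext i
    show Units.map _ (tA q hq0 j i) = Units.map _ (Xu (Equiv.swap a b i))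
    rw [umap_Xu]
    show _ = tA q hq0 (Equiv.swap a b j) (Equiv.swap a b i)
    unfold tA
    rw [apply_ite (Units.map (subst (sA a b)).toRingHom.toMonoidHom)]
    rw [map_mul, umap_cu, umap_Xu, umap_Xu]
    by_cases hij : i = j
    · subst hij
      rw [if_pos rfl, if_pos rfl]
      rfl
    · rw [if_neg hij, if_neg (fun hc => hij ((Equiv.swap a b).injective hc))]
      rfl
  rw [key]
-- part 3 : divisibility machinery

lemma smul_XL (c : ℂ) (b : Fin N) :
    c • XL b = AddMonoidAlgebra.single (Pi.single b 1) c := by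
  show c • (AddMonoidAlgebra.single (Pi.single b 1) (1:ℂ) : Laur N) = _
  rw [AddMonoidAlgebra.smul_single', mul_one]

lemma single_sub_single_ne (m1 m2 : Fin N → ℤ) (h : m1 ≠ m2) (α β : ℂ) (hα : α ≠ 0) :
    (AddMonoidAlgebra.single m1 α - AddMonoidAlgebra.single m2 β : Laur N) ≠ 0 := by
  intro h0
  have h1 : (AddMonoidAlgebra.single m1 α : Laur N) = AddMonoidAlgebra.single m2 β :=
    sub_eq_zero.mp h0
  rcases AddMonoidAlgebra.single_inj.mp h1 with ⟨h2, _⟩ | ⟨h2, _⟩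
  · exact h h2
  · exact hα h2

lemma pisingle_ne {a b : Fin N} (h : a ≠ b) : (Pi.single a 1 : Fin N → ℤ) ≠ Pi.single b 1 := by
  intro he
  have h1 : (1:ℤ) = 0 := by simpa [h] using congrFun he a
  exact one_ne_zero h1

lemma ell_ne_zero (a b : Fin N) (hab : a ≠ b) (c : ℂ) :
    (XL a - c • XL b : Laur N) ≠ 0 := by
  rw [smul_XL]
  exact single_sub_single_ne _ _ (pisingle_ne hab) _ _ one_ne_zero

lemma smul_sub_smul_ne (a b : Fin N) (hab : a ≠ b) (α β : ℂ) (hα : α ≠ 0) :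
    (α • XL a - β • XL b : Laur N) ≠ 0 := by
  rw [smul_XL, smul_XL]
  exact single_sub_single_ne _ _ (pisingle_ne hab) _ _ hα

lemma smul_XL_ne_zero (b : Fin N) (α : ℂ) (hα : α ≠ 0) : (α • XL b : Laur N) ≠ 0 := by
  rw [smul_XL]
  exact fun h => hα (AddMonoidAlgebra.single_eq_zero.mp h)

lemma sub_dvd_zpow_sub_zpow (x y : (Laur N)ˣ) (k : ℤ) :
    ((x : Laur N) - y) ∣ ((x^k : (Laur N)ˣ) : Laur N) - ((y^k : (Laur N)ˣ) : Laur N) := by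
  have inv_case : ((x : Laur N) - y) ∣ ((x⁻¹ : (Laur N)ˣ) : Laur N) - ((y⁻¹ : (Laur N)ˣ)) := by
    have e1 : ((x⁻¹ : (Laur N)ˣ) : Laur N) * x = 1 := Units.inv_mul x
    have e2 : ((y⁻¹ : (Laur N)ˣ) : Laur N) * y = 1 := Units.inv_mul y
    have key : ((x⁻¹ : (Laur N)ˣ) : Laur N) - ((y⁻¹ : (Laur N)ˣ))
        = (-(((x⁻¹ : (Laur N)ˣ) : Laur N) * ((y⁻¹ : (Laur N)ˣ)))) * ((x : Laur N) - y) := by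
      linear_combination ((y⁻¹ : (Laur N)ˣ) : Laur N) * e1 - ((x⁻¹ : (Laur N)ˣ) : Laur N) * e2
    rw [key]
    exact Dvd.intro_left _ rfl
  rcases k with n | n
  · show ((x : Laur N) - y) ∣ ((x ^ (n:ℤ) : (Laur N)ˣ) : Laur N) - ((y ^ (n:ℤ) : (Laur N)ˣ))
    rw [zpow_natCast, zpow_natCast, Units.val_pow_eq_pow_val, Units.val_pow_eq_pow_val]
    exact sub_dvd_pow_sub_pow _ _ n
  · rw [zpow_negSucc, zpow_negSucc, ← inv_pow, ← inv_pow,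
      Units.val_pow_eq_pow_val, Units.val_pow_eq_pow_val]
    exact dvd_trans inv_case (sub_dvd_pow_sub_pow _ _ (n+1))

lemma cu_Xu_val (c : ℂ) (hc : c ≠ 0) (b : Fin N) :
    ((cu c hc * Xu b : (Laur N)ˣ) : Laur N) = c • XL b := by
  rw [Units.val_mul, cu_smul, Xu_val]

lemma ev_remainder (a b : Fin N) (c : ℂ) (hc : c ≠ 0) (f : Laur N) :
    (XL a - c • XL b) ∣ (f - subst (eA a b c hc) f) := by
  induction f using AddMonoidAlgebra.induction_linear with
  | zero => simp
  | add f g hf hg =>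
    rw [map_add, add_sub_add_comm]
    exact dvd_add hf hg
  | single m c₀ =>
    have hs : (AddMonoidAlgebra.single m c₀ : Laur N) = AddMonoidAlgebra.single m c₀ := rfl
    rw [hs, subst_single]
    have hW : ∀ u : Fin N → (Laur N)ˣ, (∏ i, u i ^ (m i))
        = u a ^ (m a) * ∏ i ∈ Finset.univ.erase a, u i ^ (m i) := by
      intro u
      rw [Finset.mul_prod_erase Finset.univ (fun i => u i ^ (m i)) (Finset.mem_univ a)]
    have heq : ∀ i ∈ Finset.univ.erase a, eA a b c hc i ^ (m i) = Xu i ^ (m i) := by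
      intro i hi
      rw [eA, if_neg (Finset.ne_of_mem_erase hi)]
    have hsingle : (AddMonoidAlgebra.single m c₀ : Laur N) = c₀ • ↑(∏ i, Xu i ^ (m i)) := by
      rw [prod_Xu_eq]
      show _ = c₀ • (AddMonoidAlgebra.single m (1:ℂ) : Laur N)
      rw [AddMonoidAlgebra.smul_single', mul_one]
    rw [hsingle, hW (fun i => Xu i), hW (eA a b c hc), Finset.prod_congr rfl heq]
    rw [← smul_sub, Units.val_mul, Units.val_mul, ← sub_mul]
    have hd : (XL a - c • XL b) ∣
        (((Xu a ^ (m a) : (Laur N)ˣ) : Laur N) - ((eA a b c hc a ^ (m a) : (Laur N)ˣ))) := by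
      have := sub_dvd_zpow_sub_zpow (Xu a) (eA a b c hc a) (m a)
      rw [Xu_val] at this
      rw [show eA a b c hc a = cu c hc * Xu b from if_pos rfl] at this ⊢
      rw [cu_Xu_val] at this
      exact this
    have hd2 := hd.mul_right (↑(∏ i ∈ Finset.univ.erase a, Xu i ^ (m i)) : Laur N)
    rw [Algebra.smul_def c₀]
    exact hd2.mul_left _

lemma ev_ell (a b : Fin N) (hab : a ≠ b) (c : ℂ) (hc : c ≠ 0) :
    subst (eA a b c hc) (XL a - c • XL b) = 0 := by
  rw [map_sub, map_smul, subst_XL, subst_XL]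
  rw [show eA a b c hc a = cu c hc * Xu b from if_pos rfl,
    show eA a b c hc b = Xu b from if_neg (Ne.symm hab)]
  rw [cu_Xu_val, Xu_val, sub_self]

lemma ev_zero_dvd (a b : Fin N) (c : ℂ) (hc : c ≠ 0) (f : Laur N)
    (h : subst (eA a b c hc) f = 0) : (XL a - c • XL b) ∣ f := by
  have h2 := ev_remainder a b c hc f
  rw [h, sub_zero] at h2
  exact h2

lemma dvd_ev_zero (a b : Fin N) (hab : a ≠ b) (c : ℂ) (hc : c ≠ 0) (g : Laur N)
    (h : (XL a - c • XL b) ∣ g) : subst (eA a b c hc) g = 0 := by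
  obtain ⟨z, hz⟩ := h
  rw [hz, map_mul, ev_ell a b hab c hc, zero_mul]

lemma prime_ell (a b : Fin N) (hab : a ≠ b) (c : ℂ) (hc : c ≠ 0) :
    Prime (XL a - c • XL b : Laur N) := by
  refine ⟨ell_ne_zero a b hab c, ?_, ?_⟩
  · intro hu
    obtain ⟨v, hv⟩ := hu.exists_right_inv
    have := congrArg (subst (eA a b c hc)) hv
    rw [map_mul, map_one, ev_ell a b hab c hc, zero_mul] at this
    exact zero_ne_one this
  · intro x y hxy
    have h0 : subst (eA a b c hc) (x * y) = 0 := dvd_ev_zero a b hab c hc _ hxy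
    rw [map_mul] at h0
    rcases mul_eq_zero.mp h0 with h | h
    · exact Or.inl (ev_zero_dvd a b c hc x h)
    · exact Or.inr (ev_zero_dvd a b c hc y h)

lemma prod_pow_dvd {ι : Type} [DecidableEq ι] (s : Finset ι) (L : ι → Laur N) (e : ι → ℕ)
    (hp : ∀ i ∈ s, Prime (L i)) (hnd : ∀ i ∈ s, ∀ j ∈ s, i ≠ j → ¬ (L i ∣ L j))
    (f : Laur N) (hd : ∀ i ∈ s, L i ^ e i ∣ f) : (∏ i ∈ s, L i ^ e i) ∣ f := by
  induction s using Finset.induction_on generalizing f with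
  | empty => simpa using one_dvd f
  | insert a s hns ih =>
    obtain ⟨g, hg⟩ := hd a (Finset.mem_insert_self a s)
    have hrest : ∀ j ∈ s, L j ^ e j ∣ g := by
      intro j hj
      have hja : j ≠ a := fun h => hns (h ▸ hj)
      have hndj : ¬ (L j ∣ L a) :=
        hnd j (Finset.mem_insert_of_mem hj) a (Finset.mem_insert_self a s) hja
      have hndp : ¬ (L j ∣ L a ^ e a) :=
        fun h => hndj ((hp j (Finset.mem_insert_of_mem hj)).dvd_of_dvd_pow h)
      have h3 := hd j (Finset.mem_insert_of_mem hj)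
      rw [hg] at h3
      exact (hp j (Finset.mem_insert_of_mem hj)).pow_dvd_of_dvd_mul_left (e j) hndp h3
    rw [Finset.prod_insert hns, hg]
    exact mul_dvd_mul_left _ (ih (fun i hi => hp i (Finset.mem_insert_of_mem hi))
      (fun i hi j hj hij =>
        hnd i (Finset.mem_insert_of_mem hi) j (Finset.mem_insert_of_mem hj) hij) g hrest)
-- part 4 : setup for the main theorem

section main

variable (q : ℂ) (m : ℕ)

/-- d_j -/
def dd (j : Fin N) : Laur N := ∏ i ∈ Finset.univ.erase j, (XL i - XL j)
/-- n_j -/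
def nn (j : Fin N) : Laur N :=
  ∏ i ∈ Finset.univ.erase j, (XL i - (q ^ (-(m : ℤ))) • XL j)
/-- D = ∏ d_j -/
def DD : Laur N := ∏ j, dd j
/-- ∏_{j' ≠ j} d_{j'} -/
def DDj (j : Fin N) : Laur N := ∏ j' ∈ Finset.univ.erase j, dd j'
/-- the right-hand side -/
def SS (F : Laur N) : Laur N := ∑ j, nn q m j * DDj j * tauL q j F
/-- ∏_{p=-m}^m (X_a - q^p X_b) -/
def PP (a b : Fin N) : Laur N :=
  ∏ p ∈ Finset.Icc (-(m : ℤ)) (m : ℤ), (XL a - (q ^ p) • XL b)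

lemma hq_int (hq : ∀ n : ℕ, n ≠ 0 → q ^ n ≠ 1) : ∀ k : ℤ, k ≠ 0 → q ^ k ≠ 1 := by
  have hpos : ∀ k : ℤ, 0 < k → q ^ k ≠ 1 := by
    intro k hk h1
    have h2 : q ^ (k.toNat) = 1 := by
      rw [← zpow_natCast, Int.toNat_of_nonneg hk.le]; exact h1
    exact hq k.toNat (by omega) h2
  intro k hk h1
  rcases lt_trichotomy k 0 with h | h | h
  · have h2 : q ^ (-k) = 1 := by
      rw [zpow_neg, h1, inv_one]
    exact hpos (-k) (by omega) h2
  · exact hk h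
  · exact hpos k h h1

lemma hq_inj (hq0 : q ≠ 0) (hq : ∀ n : ℕ, n ≠ 0 → q ^ n ≠ 1) :
    ∀ p p' : ℤ, q ^ p = q ^ p' → p = p' := by
  intro p p' h
  by_contra hne
  have h1 : q ^ (p - p') = 1 := by
    rw [zpow_sub₀ hq0, h, div_self (zpow_ne_zero _ hq0)]
  exact hq_int q hq (p - p') (by omega) h1

lemma sw_XL (a b i : Fin N) : subst (sA a b) (XL i) = XL (Equiv.swap a b i) := by
  rw [subst_XL]; rfl

lemma sw_dd (a b j : Fin N) : subst (sA a b) (dd j) = dd (Equiv.swap a b j) := by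
  rw [dd, map_prod, dd]
  apply Finset.prod_equiv (Equiv.swap a b)
  · intro i
    simp only [Finset.mem_erase, Finset.mem_univ, and_true]
    exact ⟨fun h => fun hc => h ((Equiv.swap a b).injective hc),
      fun h => fun hc => h (hc ▸ rfl)⟩
  · intro i _
    rw [map_sub, sw_XL, sw_XL]

lemma sw_nn (a b j : Fin N) : subst (sA a b) (nn q m j) = nn q m (Equiv.swap a b j) := by
  rw [nn, map_prod, nn]
  apply Finset.prod_equiv (Equiv.swap a b)
  · intro i
    simp only [Finset.mem_erase, Finset.mem_univ, and_true]
    exact ⟨fun h => fun hc => h ((Equiv.swap a b).injective hc),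
      fun h => fun hc => h (hc ▸ rfl)⟩
  · intro i _
    rw [map_sub, map_smul, sw_XL, sw_XL]

lemma sw_DDj (a b j : Fin N) : subst (sA a b) (DDj j) = DDj (Equiv.swap a b j) := by
  rw [DDj, map_prod, DDj]
  apply Finset.prod_equiv (Equiv.swap a b)
  · intro i
    simp only [Finset.mem_erase, Finset.mem_univ, and_true]
    exact ⟨fun h => fun hc => h ((Equiv.swap a b).injective hc),
      fun h => fun hc => h (hc ▸ rfl)⟩
  · intro i _
    exact sw_dd a b i

lemma sw_DD (a b : Fin N) : subst (sA a b) (DD : Laur N) = DD := by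
  unfold DD
  rw [map_prod]
  apply Fintype.prod_equiv (Equiv.swap a b)
  intro j
  exact sw_dd a b j

/-- evaluation of XL under eA -/
lemma ev_XL (a b : Fin N) (c : ℂ) (hc : c ≠ 0) (i : Fin N) :
    subst (eA a b c hc) (XL i)
      = if i = a then c • XL b else XL i := by
  rw [subst_XL]
  unfold eA
  split
  · rw [cu_Xu_val]
  · rfl

lemma tau_XL (j i : Fin N) (hq0' : q ≠ 0) :
    subst (tA q hq0' j) (XL i) = if i = j then q • XL j else XL i := by
  rw [subst_XL]
  unfold tA
  split
  · rw [cu_Xu_val]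
  · rfl

end main
-- part 5 : step A, per-pair divisibility

section stepA
variable (q : ℂ) (m : ℕ)

lemma pair_sq_dvd (hq0 : q ≠ 0) (a b : Fin N) (hab : a < b) (hm : 1 ≤ m)
    (F : Laur N) (hF : F ∈ Qtrig N m q) :
    (XL a - XL b)^2 ∣ SS q m F := by
  have hne : a ≠ b := ne_of_lt hab
  obtain ⟨H, hH⟩ := hF a b hab
  set P : Finset (Fin N) := (Finset.univ.erase a).erase b with hP
  set E : Laur N := ∏ j ∈ P, dd j with hE
  set wa : Laur N := ∏ i ∈ P, (XL i - XL b) with hwa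
  set wb : Laur N := ∏ i ∈ P, (XL i - XL a) with hwb
  have hPE : (Finset.univ.erase b).erase a = P := by
    ext x
    simp only [hP, Finset.mem_erase, Finset.mem_univ, and_true]
    tauto
  have hmem_ab : a ∈ Finset.univ.erase b :=
    Finset.mem_erase.mpr ⟨hne, Finset.mem_univ a⟩
  have hmem_ba : b ∈ Finset.univ.erase a :=
    Finset.mem_erase.mpr ⟨Ne.symm hne, Finset.mem_univ b⟩
  have hda : dd a = -(XL a - XL b) * wb := by
    rw [dd, ← Finset.mul_prod_erase (Finset.univ.erase a)
      (fun i => XL i - XL a) hmem_ba, neg_sub]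
  have hdb : dd b = (XL a - XL b) * wa := by
    rw [dd, ← Finset.mul_prod_erase (Finset.univ.erase b)
      (fun i => XL i - XL b) hmem_ab, hPE]
  have hDa : DDj a = dd b * E := by
    rw [DDj, ← Finset.mul_prod_erase (Finset.univ.erase a) dd hmem_ba]
  have hDb : DDj b = dd a * E := by
    rw [DDj, ← Finset.mul_prod_erase (Finset.univ.erase b) dd hmem_ab, hPE]
  -- splitting the sum
  have hsplit : SS q m F
      = nn q m a * DDj a * tauL q a F + (nn q m b * DDj b * tauL q b F
        + ∑ j ∈ P, nn q m j * DDj j * tauL q j F) := by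
    rw [SS, ← Finset.add_sum_erase Finset.univ _ (Finset.mem_univ a),
      ← Finset.add_sum_erase (Finset.univ.erase a) _ hmem_ba]
  -- the terms j ∉ {a,b}
  have hrest : ∀ j ∈ P, (XL a - XL b)^2 ∣ nn q m j * DDj j * tauL q j F := by
    intro j hj
    have hjb : j ≠ b := (Finset.mem_erase.mp hj).1
    have hja : j ≠ a := (Finset.mem_erase.mp (Finset.mem_erase.mp hj).2).1
    have hmem1 : a ∈ Finset.univ.erase j :=
      Finset.mem_erase.mpr ⟨Ne.symm hja, Finset.mem_univ a⟩
    have hmem2 : b ∈ (Finset.univ.erase j).erase a :=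
      Finset.mem_erase.mpr ⟨Ne.symm hne,
        Finset.mem_erase.mpr ⟨Ne.symm hjb, Finset.mem_univ b⟩⟩
    have h2 : DDj j = dd a * (dd b * ∏ j' ∈ ((Finset.univ.erase j).erase a).erase b, dd j') := by
      rw [DDj, ← Finset.mul_prod_erase (Finset.univ.erase j) dd hmem1,
        ← Finset.mul_prod_erase ((Finset.univ.erase j).erase a) dd hmem2]
    rw [h2, hda, hdb]
    exact ⟨-(wb * (wa * ∏ j' ∈ ((Finset.univ.erase j).erase a).erase b, dd j'))
      * (nn q m j * tauL q j F), by ring⟩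
  -- the pair terms
  set ua : Laur N := nn q m a * wa * E * tauL q a F with hua
  set ub : Laur N := nn q m b * wb * E * tauL q b F with hub
  have hab2 : nn q m a * DDj a * tauL q a F + nn q m b * DDj b * tauL q b F
      = (XL a - XL b) * (ua - ub) := by
    rw [hDa, hDb, hda, hdb, hua, hub]; ring
  -- σ₁ kills ua - ub
  have hswF : F - subst (sA a b) F = PP q m a b * H := by
    rw [← sL_apply]
    exact hH
  have h_swb : subst (sA a b) wb = wa := by
    rw [hwb, map_prod, hwa]
    apply Finset.prod_congr rfl
    intro i hi
    have hib : i ≠ b := (Finset.mem_erase.mp hi).1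
    have hia : i ≠ a := (Finset.mem_erase.mp (Finset.mem_erase.mp hi).2).1
    rw [map_sub, sw_XL, sw_XL, Equiv.swap_apply_of_ne_of_ne hia hib,
      Equiv.swap_apply_left]
  have h_sE : subst (sA a b) E = E := by
    rw [hE, map_prod]
    apply Finset.prod_congr rfl
    intro j' hj'
    have hjb : j' ≠ b := (Finset.mem_erase.mp hj').1
    have hja : j' ≠ a := (Finset.mem_erase.mp (Finset.mem_erase.mp hj').2).1
    rw [sw_dd, Equiv.swap_apply_of_ne_of_ne hja hjb]
  have h_snnb : subst (sA a b) (nn q m b) = nn q m a := by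
    rw [sw_nn, Equiv.swap_apply_right]
  have h_stau : subst (sA a b) (tauL q b F) = subst (tA q hq0 a) (subst (sA a b) F) := by
    rw [tauL_apply q hq0 b F, sw_tau a b b q hq0 F, Equiv.swap_apply_right]
  have hsub : subst (sA a b) ub
      = nn q m a * wa * E * subst (tA q hq0 a) (subst (sA a b) F) := by
    rw [hub, map_mul, map_mul, map_mul, h_snnb, h_swb, h_sE, h_stau]
  -- PP vanishes under σ₁ ∘ τ_a
  have hPPzero : subst (eA a b 1 one_ne_zero) (subst (tA q hq0 a) (PP q m a b)) = 0 := by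
    rw [PP, map_prod, map_prod]
    apply Finset.prod_eq_zero (i := (1:ℤ))
    · simp only [Finset.mem_Icc]
      omega
    · have e1 : subst (tA q hq0 a) (XL a - (q ^ (1:ℤ)) • XL b)
          = q • XL a - (q ^ (1:ℤ)) • XL b := by
        rw [map_sub, map_smul, tau_XL q a a hq0, tau_XL q a b hq0,
          if_pos rfl, if_neg (Ne.symm hne)]
      rw [e1, map_sub, map_smul, map_smul, ev_XL, ev_XL, if_pos rfl,
        if_neg (Ne.symm hne), one_smul, zpow_one, sub_self]
  have hσdiff : subst (eA a b 1 one_ne_zero) (ua - ub) = 0 := by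
    rw [map_sub]
    have h1 : subst (eA a b 1 one_ne_zero) ub
        = subst (eA a b 1 one_ne_zero) (subst (sA a b) ub) :=
      (ev_one_sw a b hne ub).symm
    rw [h1, hsub, hua, tauL_apply q hq0 a F]
    rw [← map_sub, ← mul_sub, ← map_sub, hswF]
    simp only [map_mul]
    rw [hPPzero]
    ring
  have hdvd1 : (XL a - XL b) ∣ (ua - ub) := by
    have h0 := ev_zero_dvd a b 1 one_ne_zero _ hσdiff
    rwa [one_smul] at h0
  rw [hsplit, ← add_assoc, hab2]
  apply dvd_add
  · rw [pow_two]
    exact mul_dvd_mul_left _ hdvd1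
  · exact Finset.dvd_sum hrest

end stepA
-- part 6 : D as product over pairs, and full step A

/-- the set of ordered pairs a < b -/
def pairsLT (N : ℕ) : Finset (Fin N × Fin N) :=
  Finset.univ.filter (fun x => x.1 < x.2)

lemma DD_eq : (DD : Laur N) = (-1)^(pairsLT N).card
    * ∏ x ∈ pairsLT N, (XL x.1 - XL x.2)^2 := by
  classical
  set T : Finset (Fin N × Fin N) := Finset.univ ×ˢ Finset.univ with hT
  set g : Fin N × Fin N → Laur N :=
    (fun x => if x.2 ≠ x.1 then XL x.2 - XL x.1 else 1) with hg
  have h1 : (DD : Laur N) = ∏ x ∈ T, g x := by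
    rw [hT, Finset.prod_product]
    unfold DD dd
    apply Finset.prod_congr rfl
    intro j _
    rw [show (Finset.univ.erase j : Finset (Fin N)) = Finset.univ.filter (· ≠ j) from
      (Finset.filter_ne' Finset.univ j).symm]
    rw [Finset.prod_filter]
  have h2 : (∏ x ∈ T.filter (fun x => x.1 < x.2), g x)
      * ∏ x ∈ T.filter (fun x => ¬ x.1 < x.2), g x = ∏ x ∈ T, g x :=
    Finset.prod_filter_mul_prod_filter_not T _ g
  have h3 : T.filter (fun x => x.1 < x.2) = pairsLT N := by
    ext x
    simp [hT, pairsLT, Finset.mem_filter, Finset.mem_product]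
  have h4 : (∏ x ∈ T.filter (fun x => x.1 < x.2), g x)
      = ∏ x ∈ pairsLT N, (XL x.2 - XL x.1) := by
    rw [h3]
    apply Finset.prod_congr rfl
    intro x hx
    have hlt : x.1 < x.2 := (Finset.mem_filter.mp hx).2
    rw [hg]
    exact if_pos (ne_of_gt hlt)
  have h5 : (∏ x ∈ T.filter (fun x => ¬ x.1 < x.2), g x)
      = ∏ x ∈ pairsLT N, (XL x.1 - XL x.2) := by
    have h51 : (∏ x ∈ (T.filter (fun x => ¬ x.1 < x.2)).filter (fun x => x.2 < x.1), g x)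
        * ∏ x ∈ (T.filter (fun x => ¬ x.1 < x.2)).filter (fun x => ¬ x.2 < x.1), g x
        = ∏ x ∈ T.filter (fun x => ¬ x.1 < x.2), g x :=
      Finset.prod_filter_mul_prod_filter_not _ _ g
    have h52 : (∏ x ∈ (T.filter (fun x => ¬ x.1 < x.2)).filter (fun x => ¬ x.2 < x.1), g x)
        = 1 := by
      apply Finset.prod_eq_one
      intro x hx
      have h1x := (Finset.mem_filter.mp hx).2
      have h2x := (Finset.mem_filter.mp (Finset.mem_filter.mp hx).1).2
      have : x.1 = x.2 := le_antisymm (not_lt.mp h1x) (not_lt.mp h2x)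
      rw [hg]
      exact if_neg (by simp [this])
    have h53 : (∏ x ∈ (T.filter (fun x => ¬ x.1 < x.2)).filter (fun x => x.2 < x.1), g x)
        = ∏ x ∈ pairsLT N, (XL x.1 - XL x.2) := by
      apply Finset.prod_nbij' (i := Prod.swap) (j := Prod.swap)
      · intro x hx
        have hlt : x.2 < x.1 := (Finset.mem_filter.mp hx).2
        simp [pairsLT, hlt]
      · intro x hx
        have hlt : x.1 < x.2 := (Finset.mem_filter.mp hx).2
        simp [hT, hlt, not_lt_of_gt hlt, le_of_lt hlt]
      · intro x _; rfl
      · intro x _; rfl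
      · intro x hx
        have hlt : x.2 < x.1 := (Finset.mem_filter.mp hx).2
        show (if x.2 ≠ x.1 then XL x.2 - XL x.1 else 1) = XL x.swap.1 - XL x.swap.2
        rw [if_pos (ne_of_lt hlt)]
        rfl
    rw [← h51, h52, h53, mul_one]
  rw [h1, ← h2, h4, h5, ← Finset.prod_mul_distrib]
  have h7 : ∀ x ∈ pairsLT N, (XL x.2 - XL x.1) * (XL x.1 - XL x.2)
      = (-1 : Laur N) * (XL x.1 - XL x.2)^2 := fun x _ => by ring
  rw [Finset.prod_congr rfl h7, Finset.prod_mul_distrib, Finset.prod_const]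

lemma stepA (q : ℂ) (m : ℕ) (hq0 : q ≠ 0) (hm : 1 ≤ m)
    (F : Laur N) (hF : F ∈ Qtrig N m q) : (DD : Laur N) ∣ SS q m F := by
  have h1 : (∏ x ∈ pairsLT N, (XL x.1 - XL x.2)^2) ∣ SS q m F := by
    have := prod_pow_dvd (pairsLT N) (fun x => XL x.1 - XL x.2) (fun _ => 2)
      ?_ ?_ (SS q m F) ?_
    · exact this
    · intro x hx
      have hlt : x.1 < x.2 := (Finset.mem_filter.mp hx).2
      have h := prime_ell x.1 x.2 (ne_of_lt hlt) 1 one_ne_zero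
      rwa [one_smul] at h
    · intro x hx y hy hxy hdvd
      have hx2 : x.1 < x.2 := (Finset.mem_filter.mp hx).2
      have hy2 : y.1 < y.2 := (Finset.mem_filter.mp hy).2
      have h0 : subst (eA x.1 x.2 1 one_ne_zero) (XL y.1 - XL y.2) = 0 := by
        apply dvd_ev_zero x.1 x.2 (ne_of_lt hx2) 1 one_ne_zero
        rwa [one_smul]
      rw [map_sub, ev_XL, ev_XL] at h0
      by_cases h1y : y.1 = x.1 <;> by_cases h2y : y.2 = x.1
      · exact ne_of_lt hy2 (h1y.trans h2y.symm) 
      · rw [if_pos h1y, if_neg h2y, one_smul] at h0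
        have hne : x.2 ≠ y.2 := by
          intro h
          exact hxy (Prod.ext h1y.symm h)
        have hz := ell_ne_zero x.2 y.2 hne (1:ℂ)
        rw [one_smul] at hz
        exact hz h0
      · rw [if_neg h1y, if_pos h2y, one_smul] at h0
        have hne : y.1 ≠ x.2 := ne_of_lt (lt_trans (h2y ▸ hy2) hx2)
        have hz := ell_ne_zero y.1 x.2 hne (1:ℂ)
        rw [one_smul] at hz
        exact hz h0
      · rw [if_neg h1y, if_neg h2y] at h0
        have hz := ell_ne_zero y.1 y.2 (ne_of_lt hy2) (1:ℂ)
        rw [one_smul] at hz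
        exact hz h0
    · intro x hx
      exact pair_sq_dvd q m hq0 x.1 x.2 (Finset.mem_filter.mp hx).2 hm F hF
  obtain ⟨g, hg⟩ := h1
  refine ⟨(-1)^(pairsLT N).card * g, ?_⟩
  rw [DD_eq, hg]
  have hu : ((-1 : Laur N))^(pairsLT N).card * ((-1 : Laur N))^(pairsLT N).card = 1 := by
    rw [← mul_pow]; norm_num
  calc (∏ x ∈ pairsLT N, (XL x.1 - XL x.2)^2) * g
      = (((-1:Laur N))^(pairsLT N).card * ((-1:Laur N))^(pairsLT N).card)
        * ((∏ x ∈ pairsLT N, (XL x.1 - XL x.2)^2) * g) := by rw [hu, one_mul]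
    _ = (-1)^(pairsLT N).card * (∏ x ∈ pairsLT N, (XL x.1 - XL x.2)^2)
        * ((-1)^(pairsLT N).card * g) := by ring
-- part 7 : step B

lemma ev_factor (a b : Fin N) (hne : a ≠ b) (c : ℂ) (hc : c ≠ 0) (α β : ℂ) :
    subst (eA a b c hc) (α • XL a - β • XL b) = (α * c - β) • XL b := by
  rw [map_sub, map_smul, map_smul, ev_XL, ev_XL, if_pos rfl, if_neg (Ne.symm hne),
    smul_smul, ← sub_smul]

lemma sw_SS (q : ℂ) (m : ℕ) (hq0 : q ≠ 0) (a b : Fin N) (F : Laur N) :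
    subst (sA a b) (SS q m F)
      = ∑ j, nn q m j * DDj j * subst (tA q hq0 j) (subst (sA a b) F) := by
  rw [SS, map_sum]
  have h1 : ∀ j : Fin N, subst (sA a b) (nn q m j * DDj j * tauL q j F)
      = nn q m (Equiv.swap a b j) * DDj (Equiv.swap a b j)
        * subst (tA q hq0 (Equiv.swap a b j)) (subst (sA a b) F) := by
    intro j
    rw [map_mul, map_mul, sw_nn, sw_DDj, tauL_apply q hq0 j F, sw_tau]
  rw [Finset.sum_congr rfl (fun j _ => h1 j)]
  exact Equiv.sum_comp (Equiv.swap a b)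
    (fun j => nn q m j * DDj j * subst (tA q hq0 j) (subst (sA a b) F))

lemma key_vanish (q : ℂ) (m : ℕ) (hq0 : q ≠ 0) (a b : Fin N) (hab : a < b)
    (p : ℤ) (hp : p ∈ Finset.Icc (-(m : ℤ)) (m : ℤ)) (hp0 : p ≠ 0) (j : Fin N) :
    subst (eA a b (q^p) (zpow_ne_zero p hq0)) (nn q m j)
      * subst (eA a b (q^p) (zpow_ne_zero p hq0)) (subst (tA q hq0 j) (PP q m a b)) = 0 := by
  have hne : a ≠ b := ne_of_lt hab
  have hpm := Finset.mem_Icc.mp hp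
  by_cases hja : j = a
  · subst hja
    by_cases hpm' : p = (m : ℤ)
    · -- σ(nn a) = 0
      have hnn : subst (eA j b (q^p) (zpow_ne_zero p hq0)) (nn q m j) = 0 := by
        rw [nn, map_prod]
        apply Finset.prod_eq_zero (i := b)
          (Finset.mem_erase.mpr ⟨Ne.symm hne, Finset.mem_univ b⟩)
        rw [map_sub, map_smul, ev_XL, ev_XL, if_neg (Ne.symm hne), if_pos rfl, smul_smul]
        have : q ^ (-(m:ℤ)) * q ^ p = 1 := by
          rw [hpm', ← zpow_add₀ hq0, neg_add_cancel, zpow_zero]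
        rw [this, one_smul, sub_self]
      rw [hnn, zero_mul]
    · -- σ(τ_a PP) = 0
      have hPP : subst (eA j b (q^p) (zpow_ne_zero p hq0))
          (subst (tA q hq0 j) (PP q m j b)) = 0 := by
        rw [PP, map_prod, map_prod]
        apply Finset.prod_eq_zero (i := p + 1)
          (Finset.mem_Icc.mpr ⟨by omega, by omega⟩)
        have e1 : subst (tA q hq0 j) (XL j - (q ^ (p+1)) • XL b)
            = q • XL j - (q ^ (p+1)) • XL b := by
          rw [map_sub, map_smul, tau_XL q j j hq0, tau_XL q j b hq0,
            if_pos rfl, if_neg (Ne.symm hne)]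
        rw [e1, ev_factor j b hne _ _ q (q^(p+1))]
        rw [show q * q ^ p = q ^ (p+1) from by
          rw [zpow_add_one₀ hq0, mul_comm]]
        rw [sub_self, zero_smul]
      rw [hPP, mul_zero]
  · by_cases hjb : j = b
    · subst hjb
      by_cases hpm' : p = -(m : ℤ)
      · -- σ(nn b) = 0
        have hnn : subst (eA a j (q^p) (zpow_ne_zero p hq0)) (nn q m j) = 0 := by
          rw [nn, map_prod]
          apply Finset.prod_eq_zero (i := a)
            (Finset.mem_erase.mpr ⟨hne, Finset.mem_univ a⟩)
          rw [map_sub, map_smul, ev_XL, ev_XL, if_pos rfl, if_neg (Ne.symm hne)]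
          rw [← sub_smul, hpm', sub_self, zero_smul]
        rw [hnn, zero_mul]
      · -- σ(τ_b PP) = 0
        have hPP : subst (eA a j (q^p) (zpow_ne_zero p hq0))
            (subst (tA q hq0 j) (PP q m a j)) = 0 := by
          rw [PP, map_prod, map_prod]
          apply Finset.prod_eq_zero (i := p - 1)
            (Finset.mem_Icc.mpr ⟨by omega, by omega⟩)
          have e1 : subst (tA q hq0 j) (XL a - (q ^ (p-1)) • XL j)
              = XL a - (q ^ (p-1) * q) • XL j := by
            rw [map_sub, map_smul, tau_XL q j a hq0, tau_XL q j j hq0,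
              if_neg hne, if_pos rfl, smul_smul]
          have e2 : (XL a : Laur N) - (q ^ (p-1) * q) • XL j
              = (1:ℂ) • XL a - (q ^ (p-1) * q) • XL j := by rw [one_smul]
          rw [e1, e2, ev_factor a j hne _ _ 1 (q^(p-1)*q), one_mul]
          rw [show q ^ (p-1) * q = q ^ p from by
            rw [← zpow_add_one₀ hq0, sub_add_cancel]]
          rw [sub_self, zero_smul]
        rw [hPP, mul_zero]
    · -- j ∉ {a, b}
      have hPP : subst (eA a b (q^p) (zpow_ne_zero p hq0))
          (subst (tA q hq0 j) (PP q m a b)) = 0 := by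
        rw [PP, map_prod, map_prod]
        apply Finset.prod_eq_zero (i := p) hp
        have e1 : subst (tA q hq0 j) (XL a - (q ^ p) • XL b)
            = XL a - (q ^ p) • XL b := by
          rw [map_sub, map_smul, tau_XL q j a hq0, tau_XL q j b hq0,
            if_neg (fun h => hja h.symm), if_neg (fun h => hjb h.symm)]
        have e2 : (XL a : Laur N) - (q ^ p) • XL b
            = (1:ℂ) • XL a - (q ^ p) • XL b := by rw [one_smul]
        rw [e1, e2, ev_factor a b hne _ _ 1 (q^p), one_mul, sub_self, zero_smul]
      rw [hPP, mul_zero]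

lemma evDD_ne (q : ℂ) (m : ℕ) (hq0 : q ≠ 0) (hq : ∀ n : ℕ, n ≠ 0 → q ^ n ≠ 1)
    (a b : Fin N) (hab : a < b) (p : ℤ) (hp0 : p ≠ 0) :
    subst (eA a b (q^p) (zpow_ne_zero p hq0)) (DD : Laur N) ≠ 0 := by
  have hne : a ≠ b := ne_of_lt hab
  have hc1 : q ^ p ≠ 1 := hq_int q hq p hp0
  unfold DD dd
  rw [map_prod]
  rw [Finset.prod_congr rfl (fun j _ => map_prod (subst (eA a b (q^p) (zpow_ne_zero p hq0)))
    (fun i => XL i - XL j) (Finset.univ.erase j))]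
  apply Finset.prod_ne_zero_iff.mpr
  intro j _
  apply Finset.prod_ne_zero_iff.mpr
  intro i hi
  have hij : i ≠ j := Finset.ne_of_mem_erase hi
  rw [map_sub, ev_XL, ev_XL]
  by_cases hia : i = a <;> by_cases hja : j = a
  · exact absurd (hia.trans hja.symm) hij
  · rw [if_pos hia, if_neg hja]
    by_cases hjb : j = b
    · subst hjb
      intro h0
      have : ((q^p : ℂ) - 1) • XL j = 0 := by
        rw [sub_smul, one_smul]; exact h0
      exact smul_XL_ne_zero j _ (sub_ne_zero.mpr hc1) this
    · intro h0
      have : ((q^p : ℂ)) • XL b - (1:ℂ) • XL j = 0 := by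
        rw [one_smul]; exact h0
      exact smul_sub_smul_ne b j (fun h => hjb h.symm) _ 1 (zpow_ne_zero p hq0) this
  · rw [if_neg hia, if_pos hja]
    by_cases hib : i = b
    · subst hib
      intro h0
      have : ((1:ℂ) - q^p) • XL i = 0 := by
        rw [sub_smul, one_smul]; exact h0
      exact smul_XL_ne_zero i _ (sub_ne_zero.mpr (fun h => hc1 h.symm)) this
    · exact ell_ne_zero i b hib _
  · rw [if_neg hia, if_neg hja]
    intro h0
    have hz := ell_ne_zero i j hij (1:ℂ)
    rw [one_smul] at hz
    exact hz h0

lemma stepB (q : ℂ) (m : ℕ) (hq0 : q ≠ 0) (hq : ∀ n : ℕ, n ≠ 0 → q ^ n ≠ 1)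
    (F : Laur N) (hF : F ∈ Qtrig N m q) (G : Laur N)
    (hG : (DD : Laur N) * G = SS q m F) : G ∈ Qtrig N m q := by
  intro a b hab
  have hne : a ≠ b := ne_of_lt hab
  obtain ⟨H, hH⟩ := hF a b hab
  have hswF : F - subst (sA a b) F = PP q m a b * H := by
    rw [← sL_apply]; exact hH
  suffices hdvd : (∏ p ∈ Finset.Icc (-(m:ℤ)) (m:ℤ), (XL a - (q^p) • XL b))
      ∣ (G - subst (sA a b) G) by
    obtain ⟨K, hK⟩ := hdvd
    exact ⟨K, by rw [sL_apply]; exact hK⟩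
  have key := prod_pow_dvd (Finset.Icc (-(m:ℤ)) (m:ℤ)) (fun p => XL a - (q^p) • XL b)
    (fun _ => 1) ?_ ?_ (G - subst (sA a b) G) ?_
  · simpa [pow_one] using key
  · intro p _
    exact prime_ell a b hne _ (zpow_ne_zero p hq0)
  · intro p hp p' hp' hpp' hdvd
    have h0 := dvd_ev_zero a b hne (q^p) (zpow_ne_zero p hq0) _ hdvd
    rw [map_sub, map_smul, ev_XL, ev_XL, if_pos rfl, if_neg (Ne.symm hne), ← sub_smul] at h0
    exact smul_XL_ne_zero b _
      (sub_ne_zero.mpr (fun h => hpp' (hq_inj q hq0 hq p p' h))) h0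
  · intro p hp
    rw [pow_one]
    by_cases hp0 : p = 0
    · subst hp0
      have h0 : subst (eA a b 1 one_ne_zero) (G - subst (sA a b) G) = 0 := by
        rw [map_sub, ev_one_sw a b hne G, sub_self]
      have h2 := ev_zero_dvd a b 1 one_ne_zero _ h0
      show (XL a - (q^(0:ℤ)) • XL b) ∣ G - subst (sA a b) G
      rwa [zpow_zero]
    · apply ev_zero_dvd a b (q^p) (zpow_ne_zero p hq0)
      have hDDrel : (DD : Laur N) * (G - subst (sA a b) G)
          = SS q m F - subst (sA a b) (SS q m F) := by
        have h1 : subst (sA a b) (SS q m F) = DD * subst (sA a b) G := by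
          rw [← hG, map_mul, sw_DD]
        rw [h1, ← hG]; ring
      have hSdiff : SS q m F - subst (sA a b) (SS q m F)
          = ∑ j, nn q m j * DDj j * (subst (tA q hq0 j) (PP q m a b * H)) := by
        rw [sw_SS q m hq0 a b F, SS, ← Finset.sum_sub_distrib]
        apply Finset.sum_congr rfl
        intro j _
        rw [tauL_apply q hq0 j F, ← mul_sub, ← map_sub, hswF]
      have hzero : subst (eA a b (q^p) (zpow_ne_zero p hq0))
          (SS q m F - subst (sA a b) (SS q m F)) = 0 := by
        rw [hSdiff, map_sum]
        apply Finset.sum_eq_zero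
        intro j _
        have hv := key_vanish q m hq0 a b hab p hp hp0 j
        simp only [map_mul]
        have hr : ∀ A B C D : Laur N, A * B * (C * D) = (A * C) * (B * D) :=
          fun A B C D => by ring
        rw [hr, hv, zero_mul]
      have hprod : subst (eA a b (q^p) (zpow_ne_zero p hq0)) (DD : Laur N)
          * subst (eA a b (q^p) (zpow_ne_zero p hq0)) (G - subst (sA a b) G) = 0 := by
        rw [← map_mul, hDDrel, hzero]
      rcases mul_eq_zero.mp hprod with h | h
      · exact absurd h (evDD_ne q m hq0 hq a b hab p hp0)
      · exact h
-- part 8 : m = 0 case and conclusion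

lemma m0_SS (q : ℂ) (F : Laur N) : SS q 0 F = DD * ∑ j, tauL q j F := by
  rw [SS, Finset.mul_sum]
  apply Finset.sum_congr rfl
  intro j _
  have hnn : nn q 0 j = dd j := by
    rw [nn, dd]
    apply Finset.prod_congr rfl
    intro i _
    simp
  have hDD : (DD : Laur N) = dd j * DDj j := by
    rw [DD, DDj, ← Finset.mul_prod_erase Finset.univ dd (Finset.mem_univ j)]
  rw [hnn, hDD]

lemma m0_mem (q : ℂ) (G : Laur N) : G ∈ Qtrig N 0 q := by
  intro a b hab
  have hne := ne_of_lt hab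
  have h0 : subst (eA a b 1 one_ne_zero) (G - subst (sA a b) G) = 0 := by
    rw [map_sub, ev_one_sw a b hne G, sub_self]
  obtain ⟨K, hK⟩ := ev_zero_dvd a b 1 one_ne_zero _ h0
  refine ⟨K, ?_⟩
  have hprod : (∏ p ∈ Finset.Icc (-((0:ℕ) : ℤ)) ((0:ℕ) : ℤ), (XL a - (q^p) • XL b))
      = XL a - (1:ℂ) • XL b := by
    norm_num
  rw [hprod, sL_apply a b G, ← hK]

end S15

open S15 in
theorem statement15 (N : ℕ) (m : ℕ) (q : ℂ) (hq0 : q ≠ 0)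
    (hq : ∀ n : ℕ, n ≠ 0 → q ^ n ≠ 1) :
    ∀ F ∈ Qtrig N m q, ∃ G ∈ Qtrig N m q,
      (∏ j : Fin N, ∏ i ∈ Finset.univ.erase j, (XL i - XL j)) * G =
        ∑ j : Fin N,
          (∏ i ∈ Finset.univ.erase j, (XL i - (q ^ (-(m : ℤ))) • XL j)) *
            (∏ j' ∈ Finset.univ.erase j, ∏ i ∈ Finset.univ.erase j', (XL i - XL j')) *
            tauL q j F := by
  intro F hF
  rcases Nat.eq_zero_or_pos m with hm | hm
  · subst hm
    refine ⟨∑ j, tauL q j F, m0_mem q _, ?_⟩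
    show (DD : Laur N) * _ = SS q 0 F
    exact (m0_SS q F).symm
  · obtain ⟨G, hG⟩ := stepA q m hq0 hm F hF
    refine ⟨G, stepB q m hq0 hq F hF G hG.symm, ?_⟩
    show (DD : Laur N) * G = SS q m F
    exact hG.symm

end
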